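/- For n ≥ 2: if k > 0, the function h_k(t) = (∫₀ᵗ sin^{n-1}(√k r) dr)/sin^{n-1}(√k t) is strictly convex on (0, π/√k); if k < 0, the function h_k(t) = (∫₀ᵗ sinh^{n-1}(√(-k) r) dr)/sinh^{n-1}(√(-k) t) is strictly concave on (0, ∞); and h_0(t) = t/n is linear. -/

import Mathlib

open Real intervalIntegral Set

noncomputable def FS (m : ℕ) (a t : ℝ) : ℝ := ∫ r in (0:ℝ)..t, Real.sin (a*r) ^ m
noncomputable def FH (m : ℕ) (a t : ℝ) : ℝ := ∫ r in (0:ℝ)..t, Real.sinh (a*r) ^ m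

lemma hasDerivAt_FS (m : ℕ) (a t : ℝ) : HasDerivAt (FS m a) (Real.sin (a*t) ^ m) t := by
  have hc : Continuous fun r => Real.sin (a*r) ^ m := by continuity
  exact (hc.integral_hasStrictDerivAt 0 t).hasDerivAt

lemma hasDerivAt_FH (m : ℕ) (a t : ℝ) : HasDerivAt (FH m a) (Real.sinh (a*t) ^ m) t := by
  have hc : Continuous fun r => Real.sinh (a*r) ^ m := by continuity
  exact (hc.integral_hasStrictDerivAt 0 t).hasDerivAt

lemma FS_zero (m : ℕ) (a : ℝ) : FS m a 0 = 0 := by simp [FS]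
lemma FH_zero (m : ℕ) (a : ℝ) : FH m a 0 = 0 := by simp [FH]

lemma continuous_FS (m : ℕ) (a : ℝ) : Continuous (FS m a) :=
  continuous_iff_continuousAt.2 fun t => (hasDerivAt_FS m a t).continuousAt

lemma continuous_FH (m : ℕ) (a : ℝ) : Continuous (FH m a) :=
  continuous_iff_continuousAt.2 fun t => (hasDerivAt_FH m a t).continuousAt

lemma FS_nonneg (m : ℕ) {a t : ℝ} (ha : 0 < a) (ht : 0 ≤ t) (ht' : t ≤ Real.pi / a) :
    0 ≤ FS m a t := by
  apply intervalIntegral.integral_nonneg ht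
  intro u hu
  apply pow_nonneg
  apply Real.sin_nonneg_of_nonneg_of_le_pi (mul_nonneg ha.le hu.1)
  calc a * u ≤ a * (Real.pi / a) := by
        apply mul_le_mul_of_nonneg_left (le_trans hu.2 ht') ha.le
    _ = Real.pi := by field_simp

lemma FH_nonneg (m : ℕ) {a t : ℝ} (ha : 0 < a) (ht : 0 ≤ t) : 0 ≤ FH m a t := by
  apply intervalIntegral.integral_nonneg ht
  intro u hu
  apply pow_nonneg
  exact Real.sinh_nonneg_iff.2 (mul_nonneg ha.le hu.1)

lemma hasDerivAt_sin_mul (a y : ℝ) :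
    HasDerivAt (fun t => Real.sin (a*t)) (a * Real.cos (a*y)) y := by
  have := (Real.hasDerivAt_sin (a*y)).comp y ((hasDerivAt_id y).const_mul a)
  exact this.congr_deriv (by ring)

lemma hasDerivAt_cos_mul (a y : ℝ) :
    HasDerivAt (fun t => Real.cos (a*t)) (-(a * Real.sin (a*y))) y := by
  have := (Real.hasDerivAt_cos (a*y)).comp y ((hasDerivAt_id y).const_mul a)
  exact this.congr_deriv (by ring)

lemma hasDerivAt_sin_pow (p : ℕ) (a y : ℝ) :
    HasDerivAt (fun t => Real.sin (a*t) ^ (p+1))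
      ((p+1) * Real.sin (a*y)^p * (a * Real.cos (a*y))) y := by
  simpa using (hasDerivAt_sin_mul a y).fun_pow (p+1)

lemma G1S_hasDerivAt (m : ℕ) (a y : ℝ) :
    HasDerivAt (fun t => Real.sin (a*t)^(m+1) - m*a*(FS m a t * Real.cos (a*t)))
      (a * Real.cos (a*y) * Real.sin (a*y)^m + m*a^2*FS m a y*Real.sin (a*y)) y := by
  have h1 := hasDerivAt_sin_pow m a y
  have h2 := ((hasDerivAt_FS m a y).mul (hasDerivAt_cos_mul a y)).const_mul ((m : ℝ)*a)
  refine (h1.sub h2).congr_deriv ?_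
  ring

lemma G1S_pos (m : ℕ) {a x : ℝ} (ha : 0 < a) (hx : x ∈ Set.Ioo 0 (Real.pi/a)) :
    0 < Real.sin (a*x)^(m+1) - m*a*(FS m a x * Real.cos (a*x)) := by
  have hπ := Real.pi_pos
  have hsx : 0 < Real.sin (a*x) := by
    apply Real.sin_pos_of_pos_of_lt_pi (mul_pos ha hx.1)
    calc a * x < a * (Real.pi/a) := by exact mul_lt_mul_of_pos_left hx.2 ha
      _ = Real.pi := by field_simp
  rcases le_or_gt x (Real.pi/(2*a)) with hc | hc
  · -- monotone on Icc 0 (π/(2a))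
    have hmono : StrictMonoOn (fun t => Real.sin (a*t)^(m+1) - m*a*(FS m a t * Real.cos (a*t)))
        (Icc 0 (Real.pi/(2*a))) := by
      apply strictMonoOn_of_deriv_pos (convex_Icc _ _)
      · exact Continuous.continuousOn (by
          exact continuous_iff_continuousAt.2 fun y => (G1S_hasDerivAt m a y).continuousAt)
      · intro y hy
        rw [interior_Icc] at hy
        rw [(G1S_hasDerivAt m a y).deriv]
        have hay : 0 < a * y := mul_pos ha hy.1
        have hay2 : a * y < Real.pi/2 := by
          calc a * y < a * (Real.pi/(2*a)) := mul_lt_mul_of_pos_left hy.2 ha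
            _ = Real.pi/2 := by field_simp
        have hsy : 0 < Real.sin (a*y) :=
          Real.sin_pos_of_pos_of_lt_pi hay (lt_trans hay2 (by linarith))
        have hcy : 0 < Real.cos (a*y) := Real.cos_pos_of_mem_Ioo ⟨by linarith, hay2⟩
        have hFy : 0 ≤ FS m a y := by
          apply FS_nonneg m ha hy.1.le
          apply le_trans hy.2.le
          rw [div_le_div_iff₀ (by positivity) ha]
          nlinarith
        have t1 : 0 < a * Real.cos (a*y) * Real.sin (a*y)^m :=
          mul_pos (mul_pos ha hcy) (pow_pos hsy m)
        have t2 : 0 ≤ (m:ℝ)*a^2*FS m a y*Real.sin (a*y) :=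
          mul_nonneg (mul_nonneg (mul_nonneg (by positivity) (by positivity)) hFy) hsy.le
        linarith
    have h0 : (0:ℝ) ∈ Icc (0:ℝ) (Real.pi/(2*a)) := ⟨le_refl 0, by positivity⟩
    have := hmono h0 ⟨hx.1.le, hc⟩ hx.1
    simpa [FS_zero] using this
  · -- cos ≤ 0 case
    have hcos : Real.cos (a*x) ≤ 0 := by
      apply Real.cos_nonpos_of_pi_div_two_le_of_le
      · calc Real.pi/2 = a * (Real.pi/(2*a)) := by field_simp
          _ ≤ a * x := by nlinarith
      · have : a*x < Real.pi := by
          calc a * x < a * (Real.pi/a) := mul_lt_mul_of_pos_left hx.2 ha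
            _ = Real.pi := by field_simp
        linarith
    have hF : 0 ≤ FS m a x := FS_nonneg m ha hx.1.le hx.2.le
    have : m*a*(FS m a x * Real.cos (a*x)) ≤ 0 := by
      apply mul_nonpos_of_nonneg_of_nonpos (by positivity)
      exact mul_nonpos_of_nonneg_of_nonpos hF hcos
    have hs : 0 < Real.sin (a*x)^(m+1) := pow_pos hsx _
    linarith

lemma G2S_hasDerivAt (m : ℕ) (a y : ℝ) :
    HasDerivAt (fun t => a * (FS m a t * (1 + m * Real.cos (a*t)^2))
        - Real.cos (a*t) * Real.sin (a*t)^(m+1))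
      (2*a*Real.sin (a*y) * (Real.sin (a*y)^(m+1) - m*a*(FS m a y * Real.cos (a*y)))) y := by
  have hc2 : HasDerivAt (fun t => Real.cos (a*t)^2)
      (2 * Real.cos (a*y)^1 * (-(a * Real.sin (a*y)))) y := by
    simpa using (hasDerivAt_cos_mul a y).fun_pow 2
  have h1 : HasDerivAt (fun t => a * (FS m a t * (1 + m * Real.cos (a*t)^2)))
      (a * (Real.sin (a*y)^m * (1 + m * Real.cos (a*y)^2)
        + FS m a y * ((m:ℝ) * (2 * Real.cos (a*y)^1 * (-(a * Real.sin (a*y))))))) y :=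
    ((hasDerivAt_FS m a y).mul (((hc2.const_mul (m:ℝ))).const_add 1)).const_mul a
  have h2 : HasDerivAt (fun t => Real.cos (a*t) * Real.sin (a*t)^(m+1))
      (-(a * Real.sin (a*y)) * Real.sin (a*y)^(m+1)
        + Real.cos (a*y) * ((m+1) * Real.sin (a*y)^m * (a * Real.cos (a*y)))) y :=
    (hasDerivAt_cos_mul a y).mul (hasDerivAt_sin_pow m a y)
  refine (h1.sub h2).congr_deriv ?_
  have hpy := Real.sin_sq_add_cos_sq (a*y)
  have e1 : Real.sin (a*y)^(m+1) = Real.sin (a*y)^m * Real.sin (a*y) := pow_succ _ _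
  rw [e1]
  linear_combination (-(a * Real.sin (a*y)^m)) * hpy

lemma G2S_pos (m : ℕ) {a x : ℝ} (ha : 0 < a) (hx : x ∈ Set.Ioo 0 (Real.pi/a)) :
    0 < a * (FS m a x * (1 + m * Real.cos (a*x)^2)) - Real.cos (a*x) * Real.sin (a*x)^(m+1) := by
  have hπ := Real.pi_pos
  have hmono : StrictMonoOn (fun t => a * (FS m a t * (1 + m * Real.cos (a*t)^2))
      - Real.cos (a*t) * Real.sin (a*t)^(m+1)) (Icc 0 (Real.pi/a)) := by
    apply strictMonoOn_of_deriv_pos (convex_Icc _ _)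
    · exact Continuous.continuousOn (continuous_iff_continuousAt.2
        fun y => (G2S_hasDerivAt m a y).continuousAt)
    · intro y hy
      rw [interior_Icc] at hy
      rw [(G2S_hasDerivAt m a y).deriv]
      have hsy : 0 < Real.sin (a*y) := by
        apply Real.sin_pos_of_pos_of_lt_pi (mul_pos ha hy.1)
        calc a * y < a * (Real.pi/a) := mul_lt_mul_of_pos_left hy.2 ha
          _ = Real.pi := by field_simp
      exact mul_pos (mul_pos (by positivity) hsy) (G1S_pos m ha hy)
  have h0 : (0:ℝ) ∈ Icc (0:ℝ) (Real.pi/a) := ⟨le_refl 0, by positivity⟩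
  have := hmono h0 ⟨hx.1.le, hx.2.le⟩ hx.1
  simpa [FS_zero] using this

lemma strictConvexOn_sin (p : ℕ) {a : ℝ} (ha : 0 < a) :
    StrictConvexOn ℝ (Ioo 0 (Real.pi/a))
      (fun t => FS (p+1) a t / Real.sin (a*t)^(p+1)) := by
  have hπ := Real.pi_pos
  have hsin : ∀ x ∈ Ioo 0 (Real.pi/a), 0 < Real.sin (a*x) := by
    intro x hx
    apply Real.sin_pos_of_pos_of_lt_pi (mul_pos ha hx.1)
    calc a * x < a * (Real.pi/a) := mul_lt_mul_of_pos_left hx.2 ha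
      _ = Real.pi := by field_simp
  set Q : ℝ → ℝ := fun t => 1 - ((p:ℝ)+1)*a*(FS (p+1) a t * Real.cos (a*t)) / Real.sin (a*t)^(p+2)
    with hQdef
  have hder : ∀ y ∈ Ioo 0 (Real.pi/a),
      deriv (fun t => FS (p+1) a t / Real.sin (a*t)^(p+1)) y = Q y := by
    intro y hy
    have hsy := hsin y hy
    rw [((hasDerivAt_FS (p+1) a y).fun_div (hasDerivAt_sin_pow p a y)
      (pow_ne_zero _ hsy.ne')).deriv]
    rw [hQdef]
    field_simp
    ring
  apply strictConvexOn_of_deriv2_pos (convex_Ioo _ _)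
  · apply ContinuousOn.div (continuous_FS (p+1) a).continuousOn
      (Continuous.continuousOn (by continuity))
    exact fun x hx => pow_ne_zero _ (hsin x hx).ne'
  · intro x hx
    rw [interior_Ioo] at hx
    have hsx := hsin x hx
    have hev : deriv (fun t => FS (p+1) a t / Real.sin (a*t)^(p+1)) =ᶠ[nhds x] Q :=
      Filter.eventuallyEq_of_mem (Ioo_mem_nhds hx.1 hx.2) hder
    show 0 < deriv (deriv (fun t => FS (p+1) a t / Real.sin (a*t)^(p+1))) x
    rw [hev.deriv_eq]
    -- compute deriv Q x
    have hN : HasDerivAt (fun t => ((p:ℝ)+1)*a*(FS (p+1) a t * Real.cos (a*t)))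
        (((p:ℝ)+1)*a*(Real.sin (a*x)^(p+1) * Real.cos (a*x)
          + FS (p+1) a x * (-(a * Real.sin (a*x))))) x :=
      ((hasDerivAt_FS (p+1) a x).mul (hasDerivAt_cos_mul a x)).const_mul _
    have hD : HasDerivAt (fun t => Real.sin (a*t)^(p+2))
        ((p+2) * Real.sin (a*x)^(p+1) * (a * Real.cos (a*x))) x := by
      have := hasDerivAt_sin_pow (p+1) a x
      convert this using 2 <;> push_cast <;> ring
    have hQ : HasDerivAt Q (-((((p:ℝ)+1)*a*(Real.sin (a*x)^(p+1) * Real.cos (a*x)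
          + FS (p+1) a x * (-(a * Real.sin (a*x)))) * Real.sin (a*x)^(p+2)
          - ((p:ℝ)+1)*a*(FS (p+1) a x * Real.cos (a*x))
            * ((p+2) * Real.sin (a*x)^(p+1) * (a * Real.cos (a*x))))
          / (Real.sin (a*x)^(p+2))^2)) x :=
      (hN.div hD (pow_ne_zero _ hsx.ne')).const_sub 1
    rw [hQ.deriv]
    have hG2 := G2S_pos (p+1) ha hx
    push_cast at hG2
    have key : ((p:ℝ)+1)*a*(Real.sin (a*x)^(p+1) * Real.cos (a*x)
          + FS (p+1) a x * (-(a * Real.sin (a*x)))) * Real.sin (a*x)^(p+2)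
          - ((p:ℝ)+1)*a*(FS (p+1) a x * Real.cos (a*x))
            * (((p:ℝ)+2) * Real.sin (a*x)^(p+1) * (a * Real.cos (a*x)))
        = -( ((p:ℝ)+1) * a * Real.sin (a*x)^(p+1)
            * (a * (FS (p+1) a x * (1 + ((p:ℝ)+1) * Real.cos (a*x)^2))
              - Real.cos (a*x) * Real.sin (a*x)^(p+1+1)) ) := by
      linear_combination (-(((p:ℝ)+1) * a^2 * FS (p+1) a x * Real.sin (a*x)^(p+1)))
        * Real.sin_sq_add_cos_sq (a*x)
    rw [key, neg_div, neg_neg]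
    apply div_pos
    · exact mul_pos (mul_pos (mul_pos (by positivity) ha) (pow_pos hsx _)) hG2
    · positivity

lemma hasDerivAt_sinh_mul (a y : ℝ) :
    HasDerivAt (fun t => Real.sinh (a*t)) (a * Real.cosh (a*y)) y := by
  exact (Real.hasDerivAt_sinh (a*y)).comp y ((hasDerivAt_id y).const_mul a) |>.congr_deriv (by ring)

lemma hasDerivAt_cosh_mul (a y : ℝ) :
    HasDerivAt (fun t => Real.cosh (a*t)) (a * Real.sinh (a*y)) y := by
  exact (Real.hasDerivAt_cosh (a*y)).comp y ((hasDerivAt_id y).const_mul a) |>.congr_deriv (by ring)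

lemma hasDerivAt_sinh_pow (p : ℕ) (a y : ℝ) :
    HasDerivAt (fun t => Real.sinh (a*t) ^ (p+1))
      ((p+1) * Real.sinh (a*y)^p * (a * Real.cosh (a*y))) y := by
  simpa using (hasDerivAt_sinh_mul a y).fun_pow (p+1)

lemma GH_hasDerivAt (p : ℕ) {a : ℝ} (ha : 0 < a) (y : ℝ) :
    HasDerivAt (fun t => Real.sinh (a*t)^(p+2) / (((p:ℝ)+1)*a*Real.cosh (a*t)) - FH (p+1) a t)
      (Real.sinh (a*y)^(p+1) / (((p:ℝ)+1)*Real.cosh (a*y)^2)) y := by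
  have hcy := Real.cosh_pos (a*y)
  have hD : HasDerivAt (fun t => ((p:ℝ)+1)*a*Real.cosh (a*t))
      (((p:ℝ)+1)*a*(a * Real.sinh (a*y))) y := (hasDerivAt_cosh_mul a y).const_mul _
  have hN : HasDerivAt (fun t => Real.sinh (a*t)^(p+2))
      (((p:ℝ)+2) * Real.sinh (a*y)^(p+1) * (a * Real.cosh (a*y))) y := by
    have := hasDerivAt_sinh_pow (p+1) a y
    convert this using 2 <;> push_cast <;> ring
  have h := (hN.div hD (by positivity)).sub (hasDerivAt_FH (p+1) a y)
  refine h.congr_deriv ?_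
  have hid := Real.cosh_sq_sub_sinh_sq (a*y)
  symm
  field_simp
  linear_combination (-(Real.sinh (a*y)^(p+1))) * hid

lemma G1H_pos (p : ℕ) {a x : ℝ} (ha : 0 < a) (hx : 0 < x) :
    0 < Real.sinh (a*x)^(p+2) - ((p:ℝ)+1)*a*(FH (p+1) a x * Real.cosh (a*x)) := by
  have hmono : StrictMonoOn
      (fun t => Real.sinh (a*t)^(p+2) / (((p:ℝ)+1)*a*Real.cosh (a*t)) - FH (p+1) a t)
      (Ici 0) := by
    apply strictMonoOn_of_deriv_pos (convex_Ici _)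
    · exact Continuous.continuousOn (continuous_iff_continuousAt.2
        fun y => (GH_hasDerivAt p ha y).continuousAt)
    · intro y hy
      rw [interior_Ici] at hy
      rw [(GH_hasDerivAt p ha y).deriv]
      have hsy : 0 < Real.sinh (a*y) := Real.sinh_pos_iff.2 (mul_pos ha hy)
      have hcy := Real.cosh_pos (a*y)
      positivity
  have hG := hmono (self_mem_Ici) (mem_Ici.2 hx.le) hx
  simp only [mul_zero, Real.sinh_zero, FH_zero] at hG
  rw [zero_pow (by omega), zero_div, sub_zero] at hG
  have hc := Real.cosh_pos (a*x)
  have : ((p:ℝ)+1)*a*Real.cosh (a*x) * (Real.sinh (a*x)^(p+2) / (((p:ℝ)+1)*a*Real.cosh (a*x)) - FH (p+1) a x)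
      = Real.sinh (a*x)^(p+2) - ((p:ℝ)+1)*a*(FH (p+1) a x * Real.cosh (a*x)) := by
    field_simp
  rw [← this]
  exact mul_pos (by positivity) hG

lemma G2H_hasDerivAt (p : ℕ) (a y : ℝ) :
    HasDerivAt (fun t => Real.cosh (a*t) * Real.sinh (a*t)^(p+2)
        - a * (FH (p+1) a t * (1 + ((p:ℝ)+1) * Real.cosh (a*t)^2)))
      (2*a*Real.sinh (a*y) * (Real.sinh (a*y)^(p+2)
        - ((p:ℝ)+1)*a*(FH (p+1) a y * Real.cosh (a*y)))) y := by
  have hc2 : HasDerivAt (fun t => Real.cosh (a*t)^2)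
      (2 * Real.cosh (a*y)^1 * (a * Real.sinh (a*y))) y := by
    simpa using (hasDerivAt_cosh_mul a y).fun_pow 2
  have hN : HasDerivAt (fun t => Real.sinh (a*t)^(p+2))
      (((p:ℝ)+2) * Real.sinh (a*y)^(p+1) * (a * Real.cosh (a*y))) y := by
    have := hasDerivAt_sinh_pow (p+1) a y
    convert this using 2 <;> push_cast <;> ring
  have h1 : HasDerivAt (fun t => Real.cosh (a*t) * Real.sinh (a*t)^(p+2))
      (a * Real.sinh (a*y) * Real.sinh (a*y)^(p+2)
        + Real.cosh (a*y) * (((p:ℝ)+2) * Real.sinh (a*y)^(p+1) * (a * Real.cosh (a*y)))) y :=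
    (hasDerivAt_cosh_mul a y).mul hN
  have h2 : HasDerivAt (fun t => a * (FH (p+1) a t * (1 + ((p:ℝ)+1) * Real.cosh (a*t)^2)))
      (a * (Real.sinh (a*y)^(p+1) * (1 + ((p:ℝ)+1) * Real.cosh (a*y)^2)
        + FH (p+1) a y * (((p:ℝ)+1) * (2 * Real.cosh (a*y)^1 * (a * Real.sinh (a*y)))))) y :=
    ((hasDerivAt_FH (p+1) a y).mul ((hc2.const_mul _).const_add 1)).const_mul a
  refine (h1.sub h2).congr_deriv ?_
  have hid := Real.cosh_sq_sub_sinh_sq (a*y)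
  have e1 : Real.sinh (a*y)^(p+2) = Real.sinh (a*y)^(p+1) * Real.sinh (a*y) := pow_succ _ _
  rw [e1]
  linear_combination (a * Real.sinh (a*y)^(p+1)) * hid

lemma G2H_pos (p : ℕ) {a x : ℝ} (ha : 0 < a) (hx : 0 < x) :
    0 < Real.cosh (a*x) * Real.sinh (a*x)^(p+2)
      - a * (FH (p+1) a x * (1 + ((p:ℝ)+1) * Real.cosh (a*x)^2)) := by
  have hmono : StrictMonoOn (fun t => Real.cosh (a*t) * Real.sinh (a*t)^(p+2)
      - a * (FH (p+1) a t * (1 + ((p:ℝ)+1) * Real.cosh (a*t)^2))) (Ici 0) := by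
    apply strictMonoOn_of_deriv_pos (convex_Ici _)
    · exact Continuous.continuousOn (continuous_iff_continuousAt.2
        fun y => (G2H_hasDerivAt p a y).continuousAt)
    · intro y hy
      rw [interior_Ici] at hy
      rw [(G2H_hasDerivAt p a y).deriv]
      have hsy : 0 < Real.sinh (a*y) := Real.sinh_pos_iff.2 (mul_pos ha hy)
      exact mul_pos (mul_pos (by positivity) hsy) (G1H_pos p ha hy)
  have hG := hmono self_mem_Ici (mem_Ici.2 hx.le) hx
  simp only [mul_zero, Real.sinh_zero, FH_zero] at hG
  rw [zero_pow (by omega)] at hG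
  simpa using hG

lemma strictConcaveOn_sinh (p : ℕ) {a : ℝ} (ha : 0 < a) :
    StrictConcaveOn ℝ (Ioi 0)
      (fun t => FH (p+1) a t / Real.sinh (a*t)^(p+1)) := by
  have hsinh : ∀ x ∈ Ioi (0:ℝ), 0 < Real.sinh (a*x) :=
    fun x hx => Real.sinh_pos_iff.2 (mul_pos ha hx)
  set Q : ℝ → ℝ := fun t => 1 - ((p:ℝ)+1)*a*(FH (p+1) a t * Real.cosh (a*t)) / Real.sinh (a*t)^(p+2)
    with hQdef
  have hder : ∀ y ∈ Ioi (0:ℝ),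
      deriv (fun t => FH (p+1) a t / Real.sinh (a*t)^(p+1)) y = Q y := by
    intro y hy
    have hsy := hsinh y hy
    rw [((hasDerivAt_FH (p+1) a y).fun_div (hasDerivAt_sinh_pow p a y)
      (pow_ne_zero _ hsy.ne')).deriv]
    rw [hQdef]
    field_simp
    ring
  apply strictConcaveOn_of_deriv2_neg (convex_Ioi _)
  · apply ContinuousOn.div (continuous_FH (p+1) a).continuousOn
      (Continuous.continuousOn (by continuity))
    exact fun x hx => pow_ne_zero _ (hsinh x hx).ne'
  · intro x hx
    rw [interior_Ioi] at hx
    have hsx := hsinh x hx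
    have hev : deriv (fun t => FH (p+1) a t / Real.sinh (a*t)^(p+1)) =ᶠ[nhds x] Q :=
      Filter.eventuallyEq_of_mem (Ioi_mem_nhds hx) hder
    show deriv (deriv (fun t => FH (p+1) a t / Real.sinh (a*t)^(p+1))) x < 0
    rw [hev.deriv_eq]
    have hN : HasDerivAt (fun t => ((p:ℝ)+1)*a*(FH (p+1) a t * Real.cosh (a*t)))
        (((p:ℝ)+1)*a*(Real.sinh (a*x)^(p+1) * Real.cosh (a*x)
          + FH (p+1) a x * (a * Real.sinh (a*x)))) x :=
      ((hasDerivAt_FH (p+1) a x).mul (hasDerivAt_cosh_mul a x)).const_mul _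
    have hD : HasDerivAt (fun t => Real.sinh (a*t)^(p+2))
        (((p:ℝ)+2) * Real.sinh (a*x)^(p+1) * (a * Real.cosh (a*x))) x := by
      have := hasDerivAt_sinh_pow (p+1) a x
      convert this using 2 <;> push_cast <;> ring
    have hQ : HasDerivAt Q (-((((p:ℝ)+1)*a*(Real.sinh (a*x)^(p+1) * Real.cosh (a*x)
          + FH (p+1) a x * (a * Real.sinh (a*x))) * Real.sinh (a*x)^(p+2)
          - ((p:ℝ)+1)*a*(FH (p+1) a x * Real.cosh (a*x))
            * (((p:ℝ)+2) * Real.sinh (a*x)^(p+1) * (a * Real.cosh (a*x))))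
          / (Real.sinh (a*x)^(p+2))^2)) x :=
      (hN.div hD (pow_ne_zero _ hsx.ne')).const_sub 1
    rw [hQ.deriv]
    have hG2 := G2H_pos p ha hx
    have key : ((p:ℝ)+1)*a*(Real.sinh (a*x)^(p+1) * Real.cosh (a*x)
          + FH (p+1) a x * (a * Real.sinh (a*x))) * Real.sinh (a*x)^(p+2)
          - ((p:ℝ)+1)*a*(FH (p+1) a x * Real.cosh (a*x))
            * (((p:ℝ)+2) * Real.sinh (a*x)^(p+1) * (a * Real.cosh (a*x)))
        = ((p:ℝ)+1) * a * Real.sinh (a*x)^(p+1)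
            * (Real.cosh (a*x) * Real.sinh (a*x)^(p+2)
              - a * (FH (p+1) a x * (1 + ((p:ℝ)+1) * Real.cosh (a*x)^2))) := by
      linear_combination (-(((p:ℝ)+1) * a^2 * FH (p+1) a x * Real.sinh (a*x)^(p+1)))
        * Real.cosh_sq_sub_sinh_sq (a*x)
    rw [key]
    rw [neg_lt, neg_zero]
    apply div_pos
    · exact mul_pos (mul_pos (mul_pos (by positivity) ha) (pow_pos hsx _)) hG2
    · positivity
lemma aux_div (x y c : ℝ) (hc : c ≠ 0) : (x/c)/(y/c) = x/y := by
  rcases eq_or_ne y 0 with h|h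
  · simp [h]
  · field_simp

/-- Generalized sine `s_k`. -/
noncomputable def sk (k t : ℝ) : ℝ :=
  if k = 0 then t
  else if 0 < k then Real.sin (Real.sqrt k * t) / Real.sqrt k
  else Real.sinh (Real.sqrt (-k) * t) / Real.sqrt (-k)

/-- The volume-to-area ratio `h_k(t)` of geodesic balls in the space form of
curvature `k`. For `k > 0` it equals `(∫₀ᵗ sin^{n-1}(√k r) dr)/sin^{n-1}(√k t)`,
for `k < 0` the analogue with `sinh`, and `h_0(t) = t/n`. -/
noncomputable def hk (k : ℝ) (n : ℕ) (t : ℝ) : ℝ :=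
  (∫ r in (0:ℝ)..t, sk k r ^ (n - 1)) / sk k t ^ (n - 1)

/-- `h_k` is strictly convex on `(0, π/√k)` for `k > 0`, strictly concave on
`(0, ∞)` for `k < 0`, and `h_0(t) = t/n` is linear. -/
theorem stmt_5 (n : ℕ) (hn : 2 ≤ n) (k : ℝ) :
    (0 < k → StrictConvexOn ℝ (Set.Ioo 0 (Real.pi / Real.sqrt k)) (hk k n)) ∧
    (k < 0 → StrictConcaveOn ℝ (Set.Ioi 0) (hk k n)) ∧
    (∀ t : ℝ, hk 0 n t = t / n) := by
  have hm : n - 1 = (n-2)+1 := by omega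
  refine ⟨?_, ?_, ?_⟩
  · intro hk0
    have ha : 0 < Real.sqrt k := Real.sqrt_pos.2 hk0
    have hfun : hk k n
        = fun t => FS ((n-2)+1) (Real.sqrt k) t / Real.sin (Real.sqrt k * t)^((n-2)+1) := by
      funext t
      have hsk : ∀ r, sk k r = Real.sin (Real.sqrt k * r)/Real.sqrt k := fun r => by
        unfold sk; rw [if_neg (ne_of_gt hk0), if_pos hk0]
      unfold hk
      simp only [hsk, div_pow]
      rw [intervalIntegral.integral_div]
      rw [aux_div _ _ _ (pow_ne_zero _ ha.ne')]
      rw [hm]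
      rfl
    rw [hfun]
    exact strictConvexOn_sin (n-2) ha
  · intro hk0
    have ha : 0 < Real.sqrt (-k) := Real.sqrt_pos.2 (by linarith)
    have hfun : hk k n
        = fun t => FH ((n-2)+1) (Real.sqrt (-k)) t / Real.sinh (Real.sqrt (-k) * t)^((n-2)+1) := by
      funext t
      have hsk : ∀ r, sk k r = Real.sinh (Real.sqrt (-k) * r)/Real.sqrt (-k) := fun r => by
        unfold sk; rw [if_neg (ne_of_lt hk0), if_neg (not_lt.2 hk0.le)]
      unfold hk
      simp only [hsk, div_pow]
      rw [intervalIntegral.integral_div]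
      rw [aux_div _ _ _ (pow_ne_zero _ ha.ne')]
      rw [hm]
      rfl
    rw [hfun]
    exact strictConcaveOn_sinh (n-2) ha
  · intro t
    have hsk : ∀ r : ℝ, sk 0 r = r := fun r => by unfold sk; simp
    unfold hk
    simp only [hsk]
    rw [integral_pow]
    have h1 : n - 1 + 1 = n := by omega
    have h2 : ((n-1 : ℕ) : ℝ) + 1 = (n : ℝ) := by
      have h3 : (1:ℕ) ≤ n := by omega
      push_cast [h3]
      ring
    rw [h1, h2, zero_pow (by omega), sub_zero]
    rcases eq_or_ne t 0 with h|h
    · rw [h]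
      rw [zero_pow (by omega), zero_pow (by omega)]
      simp
    · have h4 : t^n = t * t^(n-1) := by
        rw [← pow_succ']
        congr 1
        omega
      rw [h4]
      have h5 : t^(n-1) ≠ 0 := pow_ne_zero _ h
      field_simp
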